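/- Let G be a commutative Lie group (e.g. a compact torus) with an automorphism σ that is 1-semisimple, i.e., on the Lie algebra 𝔤 one has ker(1−dσ) ⊕ im(1−dσ) = 𝔤. Let T be the identity component of the fixed-point subgroup G^σ. Then for every z ∈ G there exists g ∈ G with g⁻¹·z·σ(g) ∈ T. Equivalently, the canonical map H¹(ℤ,T) → H¹(ℤ,G) is surjective. -/

import Mathlib

/-- A compact torus is modelled as `V ⧸ Λ` for a full lattice `Λ` in a
finite-dimensional real vector space `V`; an automorphism `σ` is induced by a linear
automorphism `L` of `V` preserving `Λ`, and `dσ = L`.  If `σ` is `1`-semisimple, i.e.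
`𝔤 = ker(1−dσ) ⊕ im(1−dσ)`, then with `T` the identity component of the fixed subgroup
`G^σ`, every `z ∈ G` satisfies `g⁻¹·z·σ(g) ∈ T` for some `g`; equivalently the
canonical map `H¹(ℤ,T) → H¹(ℤ,G)` is surjective. -/
theorem stmt7 {V : Type*} [NormedAddCommGroup V] [NormedSpace ℝ V]
    [FiniteDimensional ℝ V]
    (Λ : AddSubgroup V) [DiscreteTopology Λ] [CompactSpace (V ⧸ Λ)]
    (L : V ≃ₗ[ℝ] V) (hΛ : ∀ x ∈ Λ, L x ∈ Λ)
    (σ : (V ⧸ Λ) →+ V ⧸ Λ)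
    (hσ : σ = QuotientAddGroup.map Λ Λ L.toLinearMap.toAddMonoidHom hΛ)
    (T : Set (V ⧸ Λ)) (hT : T = connectedComponentIn {x : V ⧸ Λ | σ x = x} 0)
    (hss : IsCompl (LinearMap.ker (1 - (L : V →ₗ[ℝ] V)))
      (LinearMap.range (1 - (L : V →ₗ[ℝ] V)))) :
    ∀ z : V ⧸ Λ, ∃ g : V ⧸ Λ, -g + z + σ g ∈ T := by
  subst hσ hT
  intro z
  obtain ⟨v, rfl⟩ := QuotientAddGroup.mk_surjective z
  obtain ⟨a, b, ha, hb, hab⟩ :=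
    Submodule.codisjoint_iff_exists_add_eq.mp hss.codisjoint v
  obtain ⟨w, hw⟩ := hb
  have hLa : L a = a := by
    have := (LinearMap.mem_ker).mp ha
    simp only [LinearMap.sub_apply, Module.End.one_apply] at this
    exact (sub_eq_zero.mp this).symm
  simp only [LinearMap.sub_apply, Module.End.one_apply] at hw
  refine ⟨QuotientAddGroup.mk w, ?_⟩
  have key : -(QuotientAddGroup.mk w : V ⧸ Λ) + QuotientAddGroup.mk v +
      QuotientAddGroup.map Λ Λ L.toLinearMap.toAddMonoidHom hΛ (QuotientAddGroup.mk w)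
      = QuotientAddGroup.mk a := by
    erw [QuotientAddGroup.map_mk]
    rw [← QuotientAddGroup.mk_neg, ← QuotientAddGroup.mk_add, ← QuotientAddGroup.mk_add]
    congr 1
    simp only [LinearEquiv.coe_toLinearMap, LinearMap.toAddMonoidHom_coe] at *
    have : v = a + (w - L w) := by rw [hw]; exact hab.symm
    rw [this]; abel
  rw [key]
  set f : ℝ → V ⧸ Λ := fun t => QuotientAddGroup.mk (t • a) with hf
  have hfc : Continuous f := by
    exact continuous_quotient_mk'.comp (continuous_id.smul continuous_const)
  have hpre : IsPreconnected (Set.range f) := by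
    rw [← Set.image_univ]
    exact isPreconnected_univ.image f hfc.continuousOn
  have h0 : (0 : V ⧸ Λ) ∈ Set.range f := ⟨0, by simp [hf]⟩
  have hsub : Set.range f ⊆ {x : V ⧸ Λ |
      QuotientAddGroup.map Λ Λ L.toLinearMap.toAddMonoidHom hΛ x = x} := by
    rintro _ ⟨t, rfl⟩
    simp only [hf, Set.mem_setOf_eq, QuotientAddGroup.map_mk]
    congr 1
    erw [QuotientAddGroup.map_mk]
    congr 1
    simp [map_smul, hLa]
  have := hpre.subset_connectedComponentIn h0 hsub
  exact this ⟨1, by simp [hf]⟩
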